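/- Philip Hall's theorem: For elements a ≤ b in a finite poset P, the Möbius function satisfies μ(a, b) = ∑_{i ≥ 0} (-1)^i · n_i, where n_i is the number of chains a = a_0 < a_1 < ... < a_i = b of length i from a to b. -/

import Mathlib

open Finset IncidenceAlgebra

open scoped Classical

section Aux

variable {P : Type*} [PartialOrder P] [Fintype P] [LocallyFiniteOrder P] [DecidableEq P]

/-- The "strict zeta" function `η(a,b) = 1` if `a < b`, else `0`. -/
noncomputable def hallEta (P : Type*) [PartialOrder P] : IncidenceAlgebra ℤ P :=
  ⟨fun a b => if a < b then 1 else 0, fun a b h => if_neg fun h' => h h'.le⟩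

lemma hallEta_apply (a b : P) : hallEta P a b = if a < b then 1 else 0 := rfl

lemma hallEta_add_one : hallEta P + 1 = zeta ℤ := by
  apply IncidenceAlgebra.ext
  intro a b hab
  rw [IncidenceAlgebra.add_apply, hallEta_apply, one_apply, zeta_of_le hab]
  rcases eq_or_lt_of_le hab with h | h
  · simp [h]
  · simp [h, h.ne]

lemma chain_card_zero_of_not_le {a b : P} (h : ¬ a ≤ b) (i : ℕ) :
    Nat.card {c : Fin (i + 1) → P //
      StrictMono c ∧ c 0 = a ∧ c (Fin.last i) = b} = 0 := by
  have : IsEmpty {c : Fin (i + 1) → P //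
      StrictMono c ∧ c 0 = a ∧ c (Fin.last i) = b} := by
    constructor
    rintro ⟨c, hm, h0, hl⟩
    exact h (h0 ▸ hl ▸ hm.monotone (Fin.zero_le _))
  exact Nat.card_of_isEmpty

lemma hallEta_pow_apply (i : ℕ) : ∀ a b : P,
    ((hallEta P ^ i) a b : ℤ) = (Nat.card {c : Fin (i + 1) → P //
      StrictMono c ∧ c 0 = a ∧ c (Fin.last i) = b} : ℤ) := by
  induction i with
  | zero =>
    intro a b
    rw [pow_zero, one_apply]
    rcases eq_or_ne a b with rfl | hab
    · haveI : Unique {c : Fin 1 → P //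
          StrictMono c ∧ c 0 = a ∧ c (Fin.last 0) = a} := by
        refine ⟨⟨⟨fun _ => a, Subsingleton.strictMono _, rfl, rfl⟩⟩, ?_⟩
        rintro ⟨c, hm, h0, hl⟩
        ext j
        have : j = 0 := Subsingleton.elim _ _
        simp [this, h0]
      rw [if_pos rfl, Nat.card_unique, Nat.cast_one]
    · have : IsEmpty {c : Fin 1 → P //
          StrictMono c ∧ c 0 = a ∧ c (Fin.last 0) = b} := by
        constructor
        rintro ⟨c, hm, h0, hl⟩
        exact hab (h0 ▸ hl ▸ (congrArg c (Subsingleton.elim _ _)))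
      rw [Nat.card_of_isEmpty]
      simp [hab]
  | succ i ih =>
    intro a b
    rw [pow_succ', mul_apply]
    have hterm : ∀ x ∈ Icc a b, hallEta P a x * (hallEta P ^ i) x b
        = if a < x then (Nat.card {c : Fin (i + 1) → P //
            StrictMono c ∧ c 0 = x ∧ c (Fin.last i) = b} : ℤ) else 0 := by
      intro x _
      rw [hallEta_apply, ih x b]
      split_ifs <;> simp
    rw [Finset.sum_congr rfl hterm,
      Finset.sum_subset (Finset.subset_univ (Icc a b)) (fun x _ hx => by
        split_ifs with h
        · rw [chain_card_zero_of_not_le (fun hxb => hx (mem_Icc.2 ⟨h.le, hxb⟩)) i,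
            Nat.cast_zero]
        · rfl)]
    have key : Nat.card {c : Fin (i + 1 + 1) → P //
          StrictMono c ∧ c 0 = a ∧ c (Fin.last (i + 1)) = b}
        = ∑ x : P, if a < x then Nat.card {c : Fin (i + 1) → P //
            StrictMono c ∧ c 0 = x ∧ c (Fin.last i) = b} else 0 := by
      rw [Nat.card_eq_fintype_card, Fintype.card_congr
        (Equiv.sigmaFiberEquiv (fun c : {c : Fin (i + 1 + 1) → P //
          StrictMono c ∧ c 0 = a ∧ c (Fin.last (i + 1)) = b} => c.1 1)).symm,
        Fintype.card_sigma]
      refine Finset.sum_congr rfl fun x _ => ?_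
      by_cases hax : a < x
      · rw [if_pos hax]
        have e : {c : {c : Fin (i + 1 + 1) → P //
              StrictMono c ∧ c 0 = a ∧ c (Fin.last (i + 1)) = b} // c.1 1 = x}
            ≃ {c : Fin (i + 1) → P //
              StrictMono c ∧ c 0 = x ∧ c (Fin.last i) = b} := by
          refine ⟨fun c => ⟨c.1.1 ∘ Fin.succ, c.1.2.1.comp Fin.strictMono_succ,
              by simpa [Fin.succ_zero_eq_one] using c.2,
              by simpa [Fin.succ_last] using c.1.2.2.2⟩,
            fun d => ⟨⟨Fin.cons a d.1,
              strictMono_vecCons.2 ⟨lt_of_lt_of_eq hax d.2.2.1.symm, d.2.1⟩,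
              Fin.cons_zero _ _,
              by rw [← Fin.succ_last, Fin.cons_succ]; exact d.2.2.2⟩,
              by
                show (Fin.cons a d.1 : Fin (i + 1 + 1) → P) 1 = x
                rw [← Fin.succ_zero_eq_one, Fin.cons_succ]; exact d.2.2.1⟩,
            fun c => ?_, fun d => ?_⟩
          · apply Subtype.ext
            apply Subtype.ext
            funext j
            refine Fin.cases ?_ (fun k => ?_) j
            · simp [Fin.cons_zero, c.1.2.2.1]
            · simp [Fin.cons_succ]
          · apply Subtype.ext
            funext k
            simp [Fin.cons_succ]
        rw [Fintype.card_congr e, Nat.card_eq_fintype_card]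
      · rw [if_neg hax]
        have : IsEmpty {c : {c : Fin (i + 1 + 1) → P //
            StrictMono c ∧ c 0 = a ∧ c (Fin.last (i + 1)) = b} // c.1 1 = x} := by
          constructor
          rintro ⟨⟨c, hm, h0, hl⟩, hc1⟩
          exact hax (h0 ▸ hc1 ▸ hm (by exact_mod_cast Nat.zero_lt_one))
        exact Fintype.card_eq_zero
    rw [key]
    push_cast
    rfl


lemma chain_card_zero_of_card_le {i : ℕ} (h : Fintype.card P ≤ i) (a b : P) :
    Nat.card {c : Fin (i + 1) → P //
      StrictMono c ∧ c 0 = a ∧ c (Fin.last i) = b} = 0 := by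
  have : IsEmpty {c : Fin (i + 1) → P //
      StrictMono c ∧ c 0 = a ∧ c (Fin.last i) = b} := by
    constructor
    rintro ⟨c, hm, -, -⟩
    have := Fintype.card_le_of_injective c hm.injective
    rw [Fintype.card_fin] at this
    omega
  exact Nat.card_of_isEmpty

lemma hallEta_pow_card : hallEta P ^ (Fintype.card P) = 0 := by
  apply IncidenceAlgebra.ext
  intro a b _
  rw [hallEta_pow_apply, chain_card_zero_of_card_le le_rfl, Nat.cast_zero, IncidenceAlgebra.zero_apply]

lemma hallSum_apply {ι : Type*} (s : Finset ι) (f : ι → IncidenceAlgebra ℤ P) (a b : P) :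
    (∑ i ∈ s, f i) a b = ∑ i ∈ s, f i a b := by
  induction s using Finset.cons_induction with
  | empty => simp [IncidenceAlgebra.zero_apply]
  | cons i s hi ih => rw [Finset.sum_cons, Finset.sum_cons, IncidenceAlgebra.add_apply, ih]

lemma hall_mu_eq_geom : (mu ℤ : IncidenceAlgebra ℤ P)
    = ∑ i ∈ Finset.range (Fintype.card P), (-hallEta P) ^ i := by
  set n := Fintype.card P
  set S : IncidenceAlgebra ℤ P := ∑ i ∈ Finset.range n, (-hallEta P) ^ i with hSdef
  have hgeom := geom_sum_mul (-hallEta P) n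
  have hn : (-hallEta P) ^ n = 0 := by
    rw [neg_pow, hallEta_pow_card, mul_zero]
  rw [hn, zero_sub] at hgeom
  have hS : S * zeta ℤ = 1 := by
    have h2 : hallEta P + 1 = -(-hallEta P - 1) := by
      rw [neg_sub, sub_neg_eq_add, add_comm]
    rw [← hallEta_add_one, h2, mul_neg, hgeom, neg_neg]
  calc (mu ℤ : IncidenceAlgebra ℤ P) = 1 * mu ℤ := (one_mul _).symm
    _ = (S * zeta ℤ) * mu ℤ := by rw [hS]
    _ = S * (zeta ℤ * mu ℤ) := mul_assoc _ _ _
    _ = S := by rw [zeta_mul_mu, mul_one]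

end Aux

/-- Philip Hall's theorem: for `a ≤ b` in a finite poset `P`,
`μ(a, b) = ∑_{i ≥ 0} (-1)^i · n_i`, where `n_i` is the number of chains
`a = a_0 < a_1 < ⋯ < a_i = b` of length `i` from `a` to `b`. -/
theorem stmt2 {P : Type*} [PartialOrder P] [Fintype P] [LocallyFiniteOrder P]
    [DecidableEq P] {a b : P} (hab : a ≤ b) :
    (IncidenceAlgebra.mu ℤ a b : ℤ) =
      ∑ᶠ i : ℕ, (-1 : ℤ) ^ i *
        (Nat.card {c : Fin (i + 1) → P //
          StrictMono c ∧ c 0 = a ∧ c (Fin.last i) = b} : ℤ) := by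
  classical
  set n := Fintype.card P
  have hsupp : (Function.support fun i : ℕ => (-1 : ℤ) ^ i *
      (Nat.card {c : Fin (i + 1) → P //
        StrictMono c ∧ c 0 = a ∧ c (Fin.last i) = b} : ℤ)) ⊆ ↑(Finset.range n) := by
    intro i hi
    simp only [Finset.coe_range, Set.mem_Iio]
    by_contra h
    apply hi
    show (-1 : ℤ) ^ i * (Nat.card {c : Fin (i + 1) → P //
      StrictMono c ∧ c 0 = a ∧ c (Fin.last i) = b} : ℤ) = 0
    rw [chain_card_zero_of_card_le (show Fintype.card P ≤ i by omega)]
    simp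
  rw [finsum_eq_sum_of_support_subset _ hsupp, hall_mu_eq_geom, hallSum_apply]
  refine Finset.sum_congr rfl fun i _ => ?_
  rw [← hallEta_pow_apply]
  rcases Nat.even_or_odd i with h | h
  · rw [h.neg_pow, h.neg_one_pow, one_mul]
  · rw [h.neg_pow, IncidenceAlgebra.neg_apply, h.neg_one_pow, neg_one_mul]
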